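/- Let p ≥ 1 and l ≥ 1 be integers, let D be a finite set with |D| = l, and let q be an integer with 1 ≤ q ≤ l. For each j ∈ {1,…,p} let T_j be a nonempty set, let s_j : T_j → ℝ satisfy s_j(t) > 0 for all t, and for each d ∈ D let r_{d,j} : T_j → ℝ be such that t ↦ |r_{d,j}(t)|/s_j(t) is bounded above on T_j. Define the per-component scores R̃_{d,j} := sup_{t∈T_j} |r_{d,j}(t)|/s_j(t) and the multivariate scores R_d := max_{1≤j≤p} R̃_{d,j}; let k̃_j be the q-th smallest value of (R̃_{d,j})_{d∈D} and k the q-th smallest value of (R_d)_{d∈D}. Then k̃_j ≤ k for every j ∈ {1,…,p}; consequently, for any functions y_j, μ_j : T_j → ℝ, if |y_j(t) − μ_j(t)| ≤ k̃_j · s_j(t) for all j and all t ∈ T_j, then |y_j(t) − μ_j(t)| ≤ k · s_j(t) for all j and all t ∈ T_j. -/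

import Mathlib

/-- The `q`-th smallest value (counted with multiplicity, `q` starting from 1) of a finite
family of real numbers: the `q`-th entry of the list of values sorted in nondecreasing order. -/
noncomputable def qthSmallest {D : Type*} [Fintype D] (x : D → ℝ) (q : ℕ) : ℝ :=
  (Multiset.sort (Finset.univ.val.map x) (· ≤ ·)).getD (q - 1) 0

lemma getElem_le_of_countP {L : List ℝ} (hL : L.Pairwise (· ≤ ·)) {i : ℕ} (hi : i < L.length)
    {c : ℝ} (h : i + 1 ≤ L.countP (fun a => decide (a ≤ c))) : L[i] ≤ c := by
  by_contra hc
  push_neg at hc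
  have hdrop : ∀ a ∈ L.drop i, ¬ a ≤ c := by
    intro a ha
    obtain ⟨j, hj, rfl⟩ := List.mem_iff_getElem.1 ha
    rw [List.getElem_drop]
    have hij : i + j < L.length := by simp at hj; omega
    have : L[i] ≤ L[i+j]'hij := by
      rcases Nat.eq_zero_or_pos j with rfl | hjpos
      · simp
      · exact (List.pairwise_iff_getElem.1 hL) _ _ _ _ (by omega)
    intro hle
    exact absurd (le_trans this hle) (not_le.2 hc)
  have h1 : (L.drop i).countP (fun a => decide (a ≤ c)) = 0 := by
    rw [List.countP_eq_zero]
    intro a ha; simpa using hdrop a ha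
  have h2 : (L.take i).countP (fun a => decide (a ≤ c)) ≤ i := by
    calc _ ≤ (L.take i).length := List.countP_le_length
    _ ≤ i := by simp
  have := L.take_append_drop i
  have h3 : L.countP (fun a => decide (a ≤ c)) ≤ i := by
    rw [← this, List.countP_append, h1]; omega
  omega

lemma countP_ge_of_sorted {M : List ℝ} (hM : M.Pairwise (· ≤ ·)) {i : ℕ} (hi : i < M.length) :
    i + 1 ≤ M.countP (fun a => decide (a ≤ M[i])) := by
  have hsub : (M.take (i+1)).Sublist M := List.take_sublist _ _
  have hall : ∀ a ∈ M.take (i+1), a ≤ M[i] := by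
    intro a ha
    obtain ⟨j, hj, rfl⟩ := List.mem_iff_getElem.1 ha
    rw [List.getElem_take]
    have hj' : j ≤ i := by simp at hj; omega
    rcases eq_or_lt_of_le hj' with rfl | hlt
    · exact le_rfl
    · exact (List.pairwise_iff_getElem.1 hM) _ _ _ _ hlt
  have := List.countP_eq_length (p := fun a => decide (a ≤ M[i])) (l := M.take (i+1))
  have hlen : (M.take (i+1)).length = i + 1 := by simp; omega
  calc i + 1 = (M.take (i+1)).countP (fun a => decide (a ≤ M[i])) := by
        rw [this.2 (by intro a ha; simpa using hall a ha), hlen]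
  _ ≤ _ := hsub.countP_le

lemma qthSmallest_mono {D : Type*} [Fintype D] {x y : D → ℝ} (hxy : ∀ d, x d ≤ y d)
    {q : ℕ} (hq1 : 1 ≤ q) (hq2 : q ≤ Fintype.card D) :
    qthSmallest x q ≤ qthSmallest y q := by
  set L := Multiset.sort (Finset.univ.val.map x) (· ≤ ·) with hLdef
  set M := Multiset.sort (Finset.univ.val.map y) (· ≤ ·) with hMdef
  have hLlen : L.length = Fintype.card D := by
    simp [hLdef, Multiset.length_sort]
  have hMlen : M.length = Fintype.card D := by
    simp [hMdef, Multiset.length_sort]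
  have hi : q - 1 < L.length := by omega
  have hi' : q - 1 < M.length := by omega
  have hLs : L.Pairwise (· ≤ ·) := Multiset.pairwise_sort _ _
  have hMs : M.Pairwise (· ≤ ·) := Multiset.pairwise_sort _ _
  rw [qthSmallest, qthSmallest, ← hLdef, ← hMdef, List.getD_eq_getElem _ _ hi,
    List.getD_eq_getElem _ _ hi']
  set c := M[q-1] with hc
  set i := q - 1
  have hMcount : i + 1 ≤ M.countP (fun a => decide (a ≤ c)) := countP_ge_of_sorted hMs hi'
  have hcoeM : (↑M : Multiset ℝ) = Finset.univ.val.map y := Multiset.sort_eq _ _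
  have hcoeL : (↑L : Multiset ℝ) = Finset.univ.val.map x := Multiset.sort_eq _ _
  have hMms : Multiset.countP (fun a => a ≤ c) (Finset.univ.val.map y)
      = M.countP (fun a => decide (a ≤ c)) := by
    rw [← hcoeM, Multiset.coe_countP]
  have hLms : Multiset.countP (fun a => a ≤ c) (Finset.univ.val.map x)
      = L.countP (fun a => decide (a ≤ c)) := by
    rw [← hcoeL, Multiset.coe_countP]
  have hcmp : Multiset.countP (fun a => a ≤ c) (Finset.univ.val.map y)
      ≤ Multiset.countP (fun a => a ≤ c) (Finset.univ.val.map x) := by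
    rw [Multiset.countP_map, Multiset.countP_map]
    exact Multiset.card_le_card (Multiset.monotone_filter_right _
      (fun d hd => le_trans (hxy d) hd))
  have hLcount : i + 1 ≤ L.countP (fun a => decide (a ≤ c)) := by omega
  exact getElem_le_of_countP hLs hi hLcount

theorem stmt12 (p l : ℕ) (hp : 1 ≤ p) (hl : 1 ≤ l)
    (D : Type) [Fintype D] (hD : Fintype.card D = l)
    (q : ℕ) (hq1 : 1 ≤ q) (hq2 : q ≤ l)
    (τ : Fin p → Type) (T : (j : Fin p) → Set (τ j)) (hTne : ∀ j, (T j).Nonempty)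
    (s : (j : Fin p) → τ j → ℝ) (hs : ∀ j, ∀ t ∈ T j, 0 < s j t)
    (r : D → (j : Fin p) → τ j → ℝ)
    (hbdd : ∀ d j, BddAbove ((fun t => |r d j t| / s j t) '' T j))
    (Rtil : D → Fin p → ℝ)
    (hRtil : ∀ d j, Rtil d j = sSup ((fun t => |r d j t| / s j t) '' T j))
    (Rm : D → ℝ) (hRm : ∀ d, Rm d = ⨆ j : Fin p, Rtil d j)
    (ktil : Fin p → ℝ) (hktil : ∀ j, ktil j = qthSmallest (fun d => Rtil d j) q)
    (k : ℝ) (hk : k = qthSmallest Rm q) :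
    (∀ j : Fin p, ktil j ≤ k) ∧
      ∀ y μ : (j : Fin p) → τ j → ℝ,
        (∀ j : Fin p, ∀ t ∈ T j, |y j t - μ j t| ≤ ktil j * s j t) →
          ∀ j : Fin p, ∀ t ∈ T j, |y j t - μ j t| ≤ k * s j t := by
  have hfin : ∀ d (j : Fin p), Rtil d j ≤ Rm d := by
    intro d j
    rw [hRm]
    exact le_ciSup (Set.Finite.bddAbove (Set.finite_range _)) j
  have hmain : ∀ j : Fin p, ktil j ≤ k := by
    intro j
    rw [hktil, hk]
    exact qthSmallest_mono (fun d => hfin d j) hq1 (by omega)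
  refine ⟨hmain, ?_⟩
  intro y μ hy j t ht
  calc |y j t - μ j t| ≤ ktil j * s j t := hy j t ht
  _ ≤ k * s j t := mul_le_mul_of_nonneg_right (hmain j) (hs j t ht).le
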